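/- (Order–degree–height surface for hypergeometric creative telescoping, non-rational case; linear-algebra core.) Let r, d, h ∈ ℕ be such that d + θ_x + r·μ − ν ≥ 0, h + θ_y + r·ξ − η ≥ 0, θ_k + r·μ − ν ≥ 0, and (r+1)(d+1)(h+1) − (d + 1 + θ_x + r·μ)(θ_k + r·μ + 1)·η − (d + 2 + θ_x + θ_k + 2r·μ − ν)(h + 1 + θ_y + r·ξ − η)·ν > 0. Then there exist polynomials c_0, …, c_r ∈ C[x,y] with deg_x c_i ≤ d and deg_y c_i ≤ h, and a polynomial Y ∈ C[x,y,k] with deg_x Y ≤ d + θ_x + r·μ − ν, deg_y Y ≤ h + θ_y + r·ξ − η, deg_k Y ≤ θ_k + r·μ − ν, such that c_0, …, c_r, Y are not all zero and Σ_{i=0}^{r} c_i · α^i · S_x^i(p) · Π_{m=1}^{M} P_{i,m} = Q·S_k(Y) − R·Y. -/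

import Mathlib

open MvPolynomial

noncomputable section

/-- `C[x,y,k]`, realized as `MvPolynomial (Fin 3) C` with `x = X 0`, `y = X 1`, `k = X 2`. -/
abbrev P3 (C : Type*) [CommSemiring C] := MvPolynomial (Fin 3) C

/-- The embedding `C[y] → C[x,y,k]` sending the indeterminate to `y = X 1`. -/
def toY {C : Type*} [CommSemiring C] (q : Polynomial C) : P3 C :=
  Polynomial.aeval (X 1 : P3 C) q

/-- The rising factorial `q^{(n)} = q(q+1)⋯(q+n−1)`, with `q^{(0)} = 1`. -/
def risingFactorial {C : Type*} [CommSemiring C] (q : P3 C) (n : ℕ) : P3 C :=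
  ∏ j ∈ Finset.range n, (q + (j : P3 C))

/-- The shift `S_x` on `C[x,y,k]`: `x ↦ x+1`, `y ↦ y`, `k ↦ k`. -/
def SX3 (C : Type*) [CommSemiring C] : P3 C →ₐ[C] P3 C := aeval ![X 0 + 1, X 1, X 2]

/-- The shift `S_k` on `C[x,y,k]`: `x ↦ x`, `y ↦ y`, `k ↦ k+1`. -/
def SK3 (C : Type*) [CommSemiring C] : P3 C →ₐ[C] P3 C := aeval ![X 0, X 1, X 2 + 1]

/-- The fixed data of a proper hypergeometric term
`H = p α^x β^k Π_m Γ(A_m)Γ(B_m)/(Γ(U_m)Γ(V_m))`, together with a fixed order `r`. -/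
structure HyperData (C : Type*) [Field C] [CharZero C] where
  M : ℕ
  r : ℕ
  a : Fin M → ℕ
  a' : Fin M → ℕ
  b : Fin M → ℕ
  b' : Fin M → ℕ
  u : Fin M → ℕ
  u' : Fin M → ℕ
  v : Fin M → ℕ
  v' : Fin M → ℕ
  a'' : Fin M → Polynomial C
  b'' : Fin M → Polynomial C
  u'' : Fin M → Polynomial C
  v'' : Fin M → Polynomial C
  p : P3 C
  hp : p ≠ 0
  α : Polynomial C
  β : Polynomial C
  hα : α ≠ 0
  hβ : β ≠ 0

namespace HyperData

variable {C : Type*} [Field C] [CharZero C] (H : HyperData C)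

/-- `A_m = a_m x + a'_m k + a''_m`. -/
def A (m : Fin H.M) : P3 C := (H.a m : P3 C) * X 0 + (H.a' m : P3 C) * X 2 + toY (H.a'' m)

/-- `B_m = b_m x − b'_m k + b''_m`. -/
def B (m : Fin H.M) : P3 C := (H.b m : P3 C) * X 0 - (H.b' m : P3 C) * X 2 + toY (H.b'' m)

/-- `U_m = u_m x + u'_m k + u''_m`. -/
def U (m : Fin H.M) : P3 C := (H.u m : P3 C) * X 0 + (H.u' m : P3 C) * X 2 + toY (H.u'' m)

/-- `V_m = v_m x − v'_m k + v''_m`. -/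
def V (m : Fin H.M) : P3 C := (H.v m : P3 C) * X 0 - (H.v' m : P3 C) * X 2 + toY (H.v'' m)

/-- `P_{i,m} = A_m^{(i a_m)} B_m^{(i b_m)} (U_m+i u_m)^{((r−i)u_m)} (V_m+i v_m)^{((r−i)v_m)}`. -/
def Pim (i : ℕ) (m : Fin H.M) : P3 C :=
  risingFactorial (H.A m) (i * H.a m) * risingFactorial (H.B m) (i * H.b m) *
    risingFactorial (H.U m + ((i * H.u m : ℕ) : P3 C)) ((H.r - i) * H.u m) *
    risingFactorial (H.V m + ((i * H.v m : ℕ) : P3 C)) ((H.r - i) * H.v m)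

/-- `Q = β Π_m A_m^{(a'_m)} (V_m + r v_m − v'_m)^{(v'_m)}`. -/
def Q : P3 C :=
  toY H.β * ∏ m, risingFactorial (H.A m) (H.a' m) *
    risingFactorial (H.V m + ((H.r * H.v m : ℕ) : P3 C) - ((H.v' m : ℕ) : P3 C)) (H.v' m)

/-- `R = Π_m (U_m + r u_m − u'_m)^{(u'_m)} B_m^{(b'_m)}`. -/
def R : P3 C :=
  ∏ m, risingFactorial (H.U m + ((H.r * H.u m : ℕ) : P3 C) - ((H.u' m : ℕ) : P3 C)) (H.u' m) *
    risingFactorial (H.B m) (H.b' m)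

/-- `θ_x = deg_x p`. -/
def θx : ℕ := degreeOf 0 H.p

/-- `θ_y = deg_y p`. -/
def θy : ℕ := degreeOf 1 H.p

/-- `θ_k = deg_k p`. -/
def θk : ℕ := degreeOf 2 H.p

/-- `μ = max(Σ_m (a_m + b_m), Σ_m (u_m + v_m))`. -/
def μ : ℕ := max (∑ m, (H.a m + H.b m)) (∑ m, (H.u m + H.v m))

/-- `ν = max(Σ_m (a'_m + v'_m), Σ_m (u'_m + b'_m))`. -/
def ν : ℕ := max (∑ m, (H.a' m + H.v' m)) (∑ m, (H.u' m + H.b' m))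

/-- `ξ = max(deg_y α + Σ_m (a_m deg_y A_m + b_m deg_y B_m), Σ_m (u_m deg_y U_m + v_m deg_y V_m))`. -/
def ξ : ℕ :=
  max (H.α.natDegree + ∑ m, (H.a m * degreeOf 1 (H.A m) + H.b m * degreeOf 1 (H.B m)))
    (∑ m, (H.u m * degreeOf 1 (H.U m) + H.v m * degreeOf 1 (H.V m)))

/-- `η = max(deg_y β + Σ_m (a'_m deg_y A_m + v'_m deg_y V_m), Σ_m (u'_m deg_y U_m + b'_m deg_y B_m))`. -/
def η : ℕ :=
  max (H.β.natDegree + ∑ m, (H.a' m * degreeOf 1 (H.A m) + H.v' m * degreeOf 1 (H.V m)))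
    (∑ m, (H.u' m * degreeOf 1 (H.U m) + H.b' m * degreeOf 1 (H.B m)))

/-- `P = Σ_{i=0}^{r} c_i α^i S_x^i(p) Π_m P_{i,m}`. -/
def P (c : ℕ → P3 C) : P3 C :=
  ∑ i ∈ Finset.range (H.r + 1), c i * toY H.α ^ i * (⇑(SX3 C))^[i] H.p * ∏ m, H.Pim i m

end HyperData

section Helpers

set_option linter.unusedSectionVars false

variable {C : Type*} [Field C] [CharZero C]

lemma degreeOf_natCast3 (i : Fin 3) (n : ℕ) : degreeOf i ((n : P3 C)) = 0 := by
  rw [← map_natCast (MvPolynomial.C : C →+* P3 C) n]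
  exact degreeOf_C _ _

lemma degreeOf_one3 (i : Fin 3) : degreeOf i ((1 : P3 C)) = 0 := by
  simpa using degreeOf_natCast3 (C := C) i 1

/-- degree bound for `aeval` substitutions which do not increase the `i`-degree. -/
lemma degreeOf_aeval_le (i : Fin 3) (g : Fin 3 → P3 C)
    (hg : ∀ j, degreeOf i (g j) ≤ if i = j then 1 else 0) (p : P3 C) :
    degreeOf i (aeval g p) ≤ degreeOf i p := by
  classical
  rw [aeval_def, eval₂_eq]
  refine (degreeOf_sum_le _ _ _).trans ?_
  rw [Finset.sup_le_iff]
  intro s hs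
  have h1 : degreeOf i ((algebraMap C (P3 C)) (coeff s p) * ∏ j ∈ s.support, g j ^ s j)
      ≤ ∑ j ∈ s.support, s j * (if i = j then 1 else 0) := by
    refine (degreeOf_mul_le _ _ _).trans ?_
    rw [MvPolynomial.algebraMap_eq, degreeOf_C, zero_add]
    refine (degreeOf_prod_le _ _ _).trans (Finset.sum_le_sum fun j _ => ?_)
    exact (degreeOf_pow_le _ _ _).trans (Nat.mul_le_mul_left _ (hg j))
  refine h1.trans ?_
  have h2 : ∑ j ∈ s.support, s j * (if i = j then 1 else 0) ≤ s i := by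
    have : ∀ j ∈ s.support, s j * (if i = j then 1 else 0) = if i = j then s j else 0 := by
      intro j _; split <;> simp_all
    rw [Finset.sum_congr rfl this, Finset.sum_ite_eq s.support i fun j => s j]
    split <;> simp
  exact h2.trans (monomial_le_degreeOf i hs)

lemma degreeOf_SX3_le (i : Fin 3) (p : P3 C) : degreeOf i (SX3 C p) ≤ degreeOf i p := by
  refine degreeOf_aeval_le i _ (fun j => ?_) p
  fin_cases j <;>
    simp only [Matrix.cons_val_zero, Matrix.cons_val_one, Matrix.head_cons,
      Matrix.cons_val_two, Matrix.tail_cons] <;>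
    first
      | (refine (degreeOf_add_le _ _ _).trans ?_
         simp [degreeOf_X, degreeOf_one3])
      | simp [degreeOf_X]

lemma degreeOf_SK3_le (i : Fin 3) (p : P3 C) : degreeOf i (SK3 C p) ≤ degreeOf i p := by
  refine degreeOf_aeval_le i _ (fun j => ?_) p
  fin_cases j <;>
    simp only [Matrix.cons_val_zero, Matrix.cons_val_one, Matrix.head_cons,
      Matrix.cons_val_two, Matrix.tail_cons] <;>
    first
      | (refine (degreeOf_add_le _ _ _).trans ?_
         simp [degreeOf_X, degreeOf_one3])
      | simp [degreeOf_X]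

lemma degreeOf_SX3_iter_le (i : Fin 3) (n : ℕ) (p : P3 C) :
    degreeOf i ((⇑(SX3 C))^[n] p) ≤ degreeOf i p := by
  induction n with
  | zero => simp
  | succ n ih =>
    rw [Function.iterate_succ_apply']
    exact (degreeOf_SX3_le i _).trans ih

lemma degreeOf_risingFactorial_le (i : Fin 3) (q : P3 C) (n : ℕ) {b : ℕ}
    (hq : degreeOf i q ≤ b) : degreeOf i (risingFactorial q n) ≤ n * b := by
  rw [risingFactorial]
  refine (degreeOf_prod_le _ _ _).trans ?_
  calc ∑ j ∈ Finset.range n, degreeOf i (q + (j : P3 C))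
      ≤ ∑ _j ∈ Finset.range n, b := by
        refine Finset.sum_le_sum fun j _ => (degreeOf_add_le _ _ _).trans ?_
        simp [degreeOf_natCast3, hq]
    _ = n * b := by simp [mul_comm]

lemma degreeOf_toY_le (i : Fin 3) (q : Polynomial C) :
    degreeOf i (toY q) ≤ if i = 1 then q.natDegree else 0 := by
  rw [toY, Polynomial.aeval_def, Polynomial.eval₂_eq_sum_range]
  refine (degreeOf_sum_le _ _ _).trans ?_
  rw [Finset.sup_le_iff]
  intro n hn
  refine (degreeOf_mul_le _ _ _).trans ?_
  rw [MvPolynomial.algebraMap_eq, degreeOf_C, zero_add]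
  refine (degreeOf_pow_le _ _ _).trans ?_
  rw [degreeOf_X]
  split_ifs with h
  · have := Finset.mem_range.mp hn
    omega
  · simp

lemma degreeOf_toY_ne_one (i : Fin 3) (hi : i ≠ 1) (q : Polynomial C) :
    degreeOf i (toY q) = 0 := by
  have := degreeOf_toY_le i q
  rw [if_neg hi] at this
  omega

lemma degreeOf_toY_one_le (q : Polynomial C) : degreeOf 1 (toY q) ≤ q.natDegree := by
  simpa using degreeOf_toY_le (C := C) 1 q

namespace HyperData

variable (H : HyperData C)

lemma degreeOf_A_le (m : Fin H.M) (i : Fin 3) (hi : i ≠ 1) : degreeOf i (H.A m) ≤ 1 := by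
  rw [A]
  refine (degreeOf_add_le _ _ _).trans ?_
  rw [degreeOf_toY_ne_one i hi]
  refine max_le (le_trans (degreeOf_add_le _ _ _) ?_) (by omega)
  refine max_le ?_ ?_ <;>
  · refine (degreeOf_mul_le _ _ _).trans ?_
    rw [degreeOf_natCast3, degreeOf_X]
    split <;> omega

lemma degreeOf_B_le (m : Fin H.M) (i : Fin 3) (hi : i ≠ 1) : degreeOf i (H.B m) ≤ 1 := by
  rw [B]
  refine (degreeOf_add_le _ _ _).trans ?_
  rw [degreeOf_toY_ne_one i hi]
  refine max_le (le_trans (degreeOf_sub_le _ _ _) ?_) (by omega)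
  refine max_le ?_ ?_ <;>
  · refine (degreeOf_mul_le _ _ _).trans ?_
    rw [degreeOf_natCast3, degreeOf_X]
    split <;> omega

lemma degreeOf_U_le (m : Fin H.M) (i : Fin 3) (hi : i ≠ 1) : degreeOf i (H.U m) ≤ 1 := by
  rw [U]
  refine (degreeOf_add_le _ _ _).trans ?_
  rw [degreeOf_toY_ne_one i hi]
  refine max_le (le_trans (degreeOf_add_le _ _ _) ?_) (by omega)
  refine max_le ?_ ?_ <;>
  · refine (degreeOf_mul_le _ _ _).trans ?_
    rw [degreeOf_natCast3, degreeOf_X]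
    split <;> omega

lemma degreeOf_V_le (m : Fin H.M) (i : Fin 3) (hi : i ≠ 1) : degreeOf i (H.V m) ≤ 1 := by
  rw [V]
  refine (degreeOf_add_le _ _ _).trans ?_
  rw [degreeOf_toY_ne_one i hi]
  refine max_le (le_trans (degreeOf_sub_le _ _ _) ?_) (by omega)
  refine max_le ?_ ?_ <;>
  · refine (degreeOf_mul_le _ _ _).trans ?_
    rw [degreeOf_natCast3, degreeOf_X]
    split <;> omega

lemma degreeOf_Pim_le_xk (i' : Fin 3) (hi : i' ≠ 1) (i : ℕ) (m : Fin H.M) :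
    degreeOf i' (H.Pim i m) ≤ i * (H.a m + H.b m) + (H.r - i) * (H.u m + H.v m) := by
  rw [Pim]
  have hA := degreeOf_risingFactorial_le i' (H.A m) (i * H.a m) (H.degreeOf_A_le m i' hi)
  have hB := degreeOf_risingFactorial_le i' (H.B m) (i * H.b m) (H.degreeOf_B_le m i' hi)
  have hU : degreeOf i' (H.U m + ((i * H.u m : ℕ) : P3 C)) ≤ 1 := by
    refine (degreeOf_add_le _ _ _).trans (max_le (H.degreeOf_U_le m i' hi) ?_)
    rw [degreeOf_natCast3]; omega
  have hV : degreeOf i' (H.V m + ((i * H.v m : ℕ) : P3 C)) ≤ 1 := by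
    refine (degreeOf_add_le _ _ _).trans (max_le (H.degreeOf_V_le m i' hi) ?_)
    rw [degreeOf_natCast3]; omega
  have hU' := degreeOf_risingFactorial_le i' _ ((H.r - i) * H.u m) hU
  have hV' := degreeOf_risingFactorial_le i' _ ((H.r - i) * H.v m) hV
  calc degreeOf i' _ ≤ _ := degreeOf_mul_le _ _ _
    _ ≤ _ := add_le_add (degreeOf_mul_le _ _ _) hV'
    _ ≤ _ := by
        refine add_le_add (add_le_add ((degreeOf_mul_le _ _ _).trans (add_le_add hA hB)) hU') le_rfl
    _ ≤ i * (H.a m + H.b m) + (H.r - i) * (H.u m + H.v m) := le_of_eq (by ring)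

lemma degreeOf_Pim_le_y (i : ℕ) (m : Fin H.M) :
    degreeOf 1 (H.Pim i m) ≤
      i * (H.a m * degreeOf 1 (H.A m) + H.b m * degreeOf 1 (H.B m))
        + (H.r - i) * (H.u m * degreeOf 1 (H.U m) + H.v m * degreeOf 1 (H.V m)) := by
  rw [Pim]
  have hA := degreeOf_risingFactorial_le 1 (H.A m) (i * H.a m) (le_refl (degreeOf 1 (H.A m)))
  have hB := degreeOf_risingFactorial_le 1 (H.B m) (i * H.b m) (le_refl (degreeOf 1 (H.B m)))
  have hU : degreeOf 1 (H.U m + ((i * H.u m : ℕ) : P3 C)) ≤ degreeOf 1 (H.U m) := by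
    refine (degreeOf_add_le _ _ _).trans (max_le le_rfl ?_)
    rw [degreeOf_natCast3]; omega
  have hV : degreeOf 1 (H.V m + ((i * H.v m : ℕ) : P3 C)) ≤ degreeOf 1 (H.V m) := by
    refine (degreeOf_add_le _ _ _).trans (max_le le_rfl ?_)
    rw [degreeOf_natCast3]; omega
  have hU' := degreeOf_risingFactorial_le 1 _ ((H.r - i) * H.u m) hU
  have hV' := degreeOf_risingFactorial_le 1 _ ((H.r - i) * H.v m) hV
  calc degreeOf 1 _ ≤ _ := degreeOf_mul_le _ _ _
    _ ≤ _ := add_le_add (degreeOf_mul_le _ _ _) hV'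
    _ ≤ _ := by
        refine add_le_add (add_le_add ((degreeOf_mul_le _ _ _).trans (add_le_add hA hB)) hU') le_rfl
    _ = _ := by ring

lemma degreeOf_prodPim_le_xk (i' : Fin 3) (hi : i' ≠ 1) {i : ℕ} (hir : i ≤ H.r) :
    degreeOf i' (∏ m, H.Pim i m) ≤ H.r * H.μ := by
  refine (degreeOf_prod_le _ _ _).trans ?_
  calc ∑ m, degreeOf i' (H.Pim i m)
      ≤ ∑ m, (i * (H.a m + H.b m) + (H.r - i) * (H.u m + H.v m)) :=
        Finset.sum_le_sum fun m _ => H.degreeOf_Pim_le_xk i' hi i m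
    _ = i * (∑ m, (H.a m + H.b m)) + (H.r - i) * (∑ m, (H.u m + H.v m)) := by
        rw [Finset.sum_add_distrib, Finset.mul_sum, Finset.mul_sum]
    _ ≤ i * H.μ + (H.r - i) * H.μ :=
        add_le_add (Nat.mul_le_mul_left _ (le_max_left _ _))
          (Nat.mul_le_mul_left _ (le_max_right _ _))
    _ = (i + (H.r - i)) * H.μ := by ring
    _ = H.r * H.μ := by congr 1; omega

lemma degreeOf_prodPim_le_y {i : ℕ} (hir : i ≤ H.r) :
    i * H.α.natDegree + degreeOf 1 (∏ m, H.Pim i m) ≤ H.r * H.ξ := by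
  have h := (degreeOf_prod_le 1 Finset.univ fun m => H.Pim i m).trans
    (Finset.sum_le_sum fun m _ => H.degreeOf_Pim_le_y i m)
  have heq : ∑ m, (i * (H.a m * degreeOf 1 (H.A m) + H.b m * degreeOf 1 (H.B m))
        + (H.r - i) * (H.u m * degreeOf 1 (H.U m) + H.v m * degreeOf 1 (H.V m)))
      = i * (∑ m, (H.a m * degreeOf 1 (H.A m) + H.b m * degreeOf 1 (H.B m)))
        + (H.r - i) * (∑ m, (H.u m * degreeOf 1 (H.U m) + H.v m * degreeOf 1 (H.V m))) := by
    rw [Finset.sum_add_distrib, Finset.mul_sum, Finset.mul_sum]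
  rw [heq] at h
  have h1 : i * H.α.natDegree
        + i * (∑ m, (H.a m * degreeOf 1 (H.A m) + H.b m * degreeOf 1 (H.B m)))
      ≤ i * H.ξ := by
    rw [← Nat.mul_add]
    exact Nat.mul_le_mul_left _ (le_max_left _ _)
  have h2 : (H.r - i) * (∑ m, (H.u m * degreeOf 1 (H.U m) + H.v m * degreeOf 1 (H.V m)))
      ≤ (H.r - i) * H.ξ := Nat.mul_le_mul_left _ (le_max_right _ _)
  have : i * H.ξ + (H.r - i) * H.ξ = H.r * H.ξ := by
    rw [← Nat.add_mul]; congr 1; omega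
  omega

lemma sum_a'v'_le_ν : (∑ m, (H.a' m + H.v' m)) ≤ H.ν := le_max_left _ _

lemma degreeOf_Q_le_xk (i : Fin 3) (hi : i ≠ 1) : degreeOf i H.Q ≤ H.ν := by
  rw [Q]
  refine (degreeOf_mul_le _ _ _).trans ?_
  rw [degreeOf_toY_ne_one i hi, zero_add]
  refine le_trans (degreeOf_prod_le _ _ _) (le_trans (Finset.sum_le_sum (fun m _ => ?_))
    H.sum_a'v'_le_ν)
  refine (degreeOf_mul_le _ _ _).trans ?_
  have hA := degreeOf_risingFactorial_le i (H.A m) (H.a' m) (H.degreeOf_A_le m i hi)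
  have hV : degreeOf i (H.V m + ((H.r * H.v m : ℕ) : P3 C) - ((H.v' m : ℕ) : P3 C)) ≤ 1 := by
    refine (degreeOf_sub_le _ _ _).trans (max_le ((degreeOf_add_le _ _ _).trans
      (max_le (H.degreeOf_V_le m i hi) ?_)) ?_) <;> (rw [degreeOf_natCast3]; omega)
  have hV' := degreeOf_risingFactorial_le i _ (H.v' m) hV
  simp only [mul_one] at hA hV'
  omega

lemma degreeOf_Q_le_y : degreeOf 1 H.Q ≤ H.η := by
  rw [Q]
  refine (degreeOf_mul_le _ _ _).trans (le_trans ?_ (le_max_left _ _))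
  refine add_le_add (degreeOf_toY_one_le _) ?_
  refine le_trans (degreeOf_prod_le _ _ _) (Finset.sum_le_sum (fun m _ => ?_))
  refine (degreeOf_mul_le _ _ _).trans ?_
  have hA := degreeOf_risingFactorial_le 1 (H.A m) (H.a' m) (le_refl (degreeOf 1 (H.A m)))
  have hV : degreeOf 1 (H.V m + ((H.r * H.v m : ℕ) : P3 C) - ((H.v' m : ℕ) : P3 C))
      ≤ degreeOf 1 (H.V m) := by
    refine (degreeOf_sub_le _ _ _).trans (max_le ((degreeOf_add_le _ _ _).trans
      (max_le le_rfl ?_)) ?_) <;> (rw [degreeOf_natCast3]; omega)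
  have hV' := degreeOf_risingFactorial_le 1 _ (H.v' m) hV
  calc degreeOf 1 _ + degreeOf 1 _ ≤ _ := add_le_add hA hV'
    _ ≤ _ := by exact add_le_add (Nat.mul_le_mul_right _ le_rfl) le_rfl
    _ = H.a' m * degreeOf 1 (H.A m) + H.v' m * degreeOf 1 (H.V m) := by ring

lemma degreeOf_R_le_xk (i : Fin 3) (hi : i ≠ 1) : degreeOf i H.R ≤ H.ν := by
  rw [R]
  refine le_trans (degreeOf_prod_le _ _ _) (le_trans (Finset.sum_le_sum (fun m _ => ?_))
    (le_max_right _ _))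
  refine (degreeOf_mul_le _ _ _).trans ?_
  have hB := degreeOf_risingFactorial_le i (H.B m) (H.b' m) (H.degreeOf_B_le m i hi)
  have hU : degreeOf i (H.U m + ((H.r * H.u m : ℕ) : P3 C) - ((H.u' m : ℕ) : P3 C)) ≤ 1 := by
    refine (degreeOf_sub_le _ _ _).trans (max_le ((degreeOf_add_le _ _ _).trans
      (max_le (H.degreeOf_U_le m i hi) ?_)) ?_) <;> (rw [degreeOf_natCast3]; omega)
  have hU' := degreeOf_risingFactorial_le i _ (H.u' m) hU
  simp only [mul_one] at hB hU'
  omega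

lemma degreeOf_R_le_y : degreeOf 1 H.R ≤ H.η := by
  rw [R]
  refine le_trans (degreeOf_prod_le _ _ _) (le_trans (Finset.sum_le_sum (fun m _ => ?_))
    (le_max_right _ _))
  refine (degreeOf_mul_le _ _ _).trans ?_
  have hB := degreeOf_risingFactorial_le 1 (H.B m) (H.b' m) (le_refl (degreeOf 1 (H.B m)))
  have hU : degreeOf 1 (H.U m + ((H.r * H.u m : ℕ) : P3 C) - ((H.u' m : ℕ) : P3 C))
      ≤ degreeOf 1 (H.U m) := by
    refine (degreeOf_sub_le _ _ _).trans (max_le ((degreeOf_add_le _ _ _).trans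
      (max_le le_rfl ?_)) ?_) <;> (rw [degreeOf_natCast3]; omega)
  have hU' := degreeOf_risingFactorial_le 1 _ (H.u' m) hU
  exact add_le_add hU' hB

end HyperData

/-- The bound Finsupp `(a, b, c)` on `Fin 3`. -/
def mkD (a b c : ℕ) : Fin 3 →₀ ℕ := Finsupp.equivFunOnFinite.symm ![a, b, c]

@[simp] lemma mkD_apply (a b c : ℕ) (i : Fin 3) : mkD a b c i = ![a, b, c] i := rfl

lemma mem_restrictSupport_iff (D : Fin 3 →₀ ℕ) (p : P3 C) :
    p ∈ restrictSupport C (↑(Finset.Iic D) : Set (Fin 3 →₀ ℕ)) ↔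
      ∀ i, degreeOf i p ≤ D i := by
  rw [restrictSupport, AddMonoidAlgebra.mem_supported]
  constructor
  · intro hsub i
    rw [degreeOf_le_iff]
    intro s hs
    have := hsub hs
    simp only [Finset.coe_Iic, Set.mem_Iic] at this
    exact this i
  · intro hdeg s hs
    simp only [Finset.coe_Iic, Set.mem_Iic]
    intro i
    exact (degreeOf_le_iff.mp (hdeg i)) s hs

lemma card_Iic_mkD (a b c : ℕ) :
    (Finset.Iic (mkD a b c)).card = (a + 1) * (b + 1) * (c + 1) := by
  rw [Finsupp.card_Iic]
  have h1 : ∏ i ∈ (mkD a b c).support, ((Finset.Iic (mkD a b c i)).card)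
      = ∏ i : Fin 3, ((Finset.Iic (mkD a b c i)).card) :=
    Finset.prod_subset (Finset.subset_univ _) (fun i _ hi => by
      rw [Finsupp.notMem_support_iff.mp hi]; simp)
  rw [h1, Fin.prod_univ_three]
  simp [Nat.card_Iic]

/-- The finrank of the restricted-support space. -/
lemma finrank_restrictSupport (a b c : ℕ) :
    Module.finrank C (restrictSupport C (↑(Finset.Iic (mkD a b c)) : Set (Fin 3 →₀ ℕ)))
      = (a + 1) * (b + 1) * (c + 1) := by
  rw [Module.finrank_eq_card_basis
    (basisRestrictSupport C (↑(Finset.Iic (mkD a b c)) : Set (Fin 3 →₀ ℕ)))]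
  have h2 : Fintype.card ↥(↑(Finset.Iic (mkD a b c)) : Set (Fin 3 →₀ ℕ))
      = (Finset.Iic (mkD a b c)).card := by
    rw [← Fintype.card_coe (Finset.Iic (mkD a b c))]
    exact Fintype.card_congr (Equiv.subtypeEquivRight (fun x => by simp))
  rw [h2]
  exact card_Iic_mkD a b c

@[simp] lemma mkD_0 (a b c : ℕ) : mkD a b c 0 = a := rfl
@[simp] lemma mkD_1 (a b c : ℕ) : mkD a b c 1 = b := rfl
@[simp] lemma mkD_2 (a b c : ℕ) : mkD a b c 2 = c := rfl

/-- The space of polynomials with coordinatewise degree bounds `(a,b,c)`. -/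
def Wsp (C : Type*) [CommSemiring C] (a b c : ℕ) : Submodule C (P3 C) :=
  restrictSupport C (↑(Finset.Iic (mkD a b c)) : Set (Fin 3 →₀ ℕ))

instance (a b c : ℕ) : Module.Finite C (Wsp C a b c) :=
  Module.Finite.of_basis (basisRestrictSupport C _)

instance (a b c : ℕ) : Module.Free C (Wsp C a b c) :=
  Module.Free.of_basis (basisRestrictSupport C _)

lemma finrank_Wsp (a b c : ℕ) :
    Module.finrank C (Wsp C a b c) = (a + 1) * (b + 1) * (c + 1) :=
  finrank_restrictSupport a b c

lemma mem_Wsp_iff {a b c : ℕ} {p : P3 C} :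
    p ∈ Wsp C a b c ↔ degreeOf 0 p ≤ a ∧ degreeOf 1 p ≤ b ∧ degreeOf 2 p ≤ c := by
  rw [Wsp, _root_.mem_restrictSupport_iff]
  constructor
  · intro h
    exact ⟨by simpa using h 0, by simpa using h 1, by simpa using h 2⟩
  · rintro ⟨h0, h1, h2⟩ i
    fin_cases i <;> simpa

/-- The fixed coefficient polynomials of the telescoper equation. -/
def gP (H : HyperData C) (i : ℕ) : P3 C :=
  toY H.α ^ i * (⇑(SX3 C))^[i] H.p * ∏ m, H.Pim i m

lemma deg_gP_0 (H : HyperData C) {i : ℕ} (hi : i ≤ H.r) :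
    degreeOf 0 (gP H i) ≤ H.θx + H.r * H.μ := by
  have t1 : degreeOf 0 (toY H.α ^ i : P3 C) ≤ i * 0 :=
    (degreeOf_pow_le _ _ _).trans (by rw [degreeOf_toY_ne_one 0 (by decide)])
  have t2 : degreeOf 0 ((⇑(SX3 C))^[i] H.p) ≤ H.θx := degreeOf_SX3_iter_le 0 i H.p
  have t3 := H.degreeOf_prodPim_le_xk 0 (by decide) hi
  calc degreeOf 0 (gP H i) ≤ _ := degreeOf_mul_le _ _ _
    _ ≤ (degreeOf 0 (toY H.α ^ i : P3 C) + degreeOf 0 ((⇑(SX3 C))^[i] H.p))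
        + degreeOf 0 (∏ m, H.Pim i m) := add_le_add_left (degreeOf_mul_le _ _ _) _
    _ ≤ H.θx + H.r * H.μ := by omega

lemma deg_gP_2 (H : HyperData C) {i : ℕ} (hi : i ≤ H.r) :
    degreeOf 2 (gP H i) ≤ H.θk + H.r * H.μ := by
  have t1 : degreeOf 2 (toY H.α ^ i : P3 C) ≤ i * 0 :=
    (degreeOf_pow_le _ _ _).trans (by rw [degreeOf_toY_ne_one 2 (by decide)])
  have t2 : degreeOf 2 ((⇑(SX3 C))^[i] H.p) ≤ H.θk := degreeOf_SX3_iter_le 2 i H.p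
  have t3 := H.degreeOf_prodPim_le_xk 2 (by decide) hi
  calc degreeOf 2 (gP H i) ≤ _ := degreeOf_mul_le _ _ _
    _ ≤ (degreeOf 2 (toY H.α ^ i : P3 C) + degreeOf 2 ((⇑(SX3 C))^[i] H.p))
        + degreeOf 2 (∏ m, H.Pim i m) := add_le_add_left (degreeOf_mul_le _ _ _) _
    _ ≤ H.θk + H.r * H.μ := by omega

lemma deg_gP_1 (H : HyperData C) {i : ℕ} (hi : i ≤ H.r) :
    degreeOf 1 (gP H i) ≤ H.θy + H.r * H.ξ := by
  have t1 : degreeOf 1 (toY H.α ^ i : P3 C) ≤ i * H.α.natDegree :=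
    (degreeOf_pow_le _ _ _).trans (Nat.mul_le_mul_left _ (degreeOf_toY_one_le _))
  have t2 : degreeOf 1 ((⇑(SX3 C))^[i] H.p) ≤ H.θy := degreeOf_SX3_iter_le 1 i H.p
  have t3 := H.degreeOf_prodPim_le_y hi
  calc degreeOf 1 (gP H i) ≤ _ := degreeOf_mul_le _ _ _
    _ ≤ (degreeOf 1 (toY H.α ^ i : P3 C) + degreeOf 1 ((⇑(SX3 C))^[i] H.p))
        + degreeOf 1 (∏ m, H.Pim i m) := add_le_add_left (degreeOf_mul_le _ _ _) _
    _ ≤ H.θy + H.r * H.ξ := by omega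

/-- The linear map underlying the telescoping linear system. -/
def phiMap (H : HyperData C) (d h Ex Ey Ek : ℕ) :
    ((Fin (H.r + 1) → Wsp C d h 0) × Wsp C Ex Ey Ek) →ₗ[C] P3 C where
  toFun w := (∑ i : Fin (H.r + 1), ((w.1 i : P3 C) * gP H i.val))
    - (H.Q * SK3 C (w.2 : P3 C) - H.R * (w.2 : P3 C))
  map_add' w1 w2 := by
    simp only [Prod.fst_add, Pi.add_apply, Submodule.coe_add, Prod.snd_add, map_add,
      add_mul, mul_add, Finset.sum_add_distrib]
    ring
  map_smul' t w := by
    simp only [Prod.smul_fst, Prod.smul_snd, Pi.smul_apply, SetLike.val_smul, map_smul,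
      smul_mul_assoc, mul_smul_comm, RingHom.id_apply]
    rw [← Finset.smul_sum, ← smul_sub, ← smul_sub]

lemma phiMap_mem (H : HyperData C) {d h Ex Ey Ek : ℕ}
    (hEx : Ex + H.ν = d + H.θx + H.r * H.μ)
    (hEy : Ey + H.η = h + H.θy + H.r * H.ξ)
    (hEk : Ek + H.ν = H.θk + H.r * H.μ)
    (w : (Fin (H.r + 1) → Wsp C d h 0) × Wsp C Ex Ey Ek) :
    phiMap H d h Ex Ey Ek w
      ∈ Wsp C (d + H.θx + H.r * H.μ) (h + H.θy + H.r * H.ξ) (H.θk + H.r * H.μ) := by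
  have hY := mem_Wsp_iff.mp w.2.2
  rw [mem_Wsp_iff]
  have hsum : ∀ j : Fin 3, ∀ bc bg : ℕ,
      (∀ i : Fin (H.r + 1), degreeOf j ((w.1 i : P3 C)) ≤ bc) →
      (∀ i : Fin (H.r + 1), degreeOf j (gP H i.val) ≤ bg) →
      degreeOf j (∑ i : Fin (H.r + 1), ((w.1 i : P3 C) * gP H i.val)) ≤ bc + bg := by
    intro j bc bg hc hg
    refine (degreeOf_sum_le _ _ _).trans (Finset.sup_le fun i _ => ?_)
    exact (degreeOf_mul_le _ _ _).trans (add_le_add (hc i) (hg i))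
  have hQR : ∀ j : Fin 3, ∀ bq e : ℕ,
      degreeOf j H.Q ≤ bq → degreeOf j H.R ≤ bq → degreeOf j (w.2 : P3 C) ≤ e →
      degreeOf j (H.Q * SK3 C (w.2 : P3 C) - H.R * (w.2 : P3 C)) ≤ bq + e := by
    intro j bq e hq hr he
    refine (degreeOf_sub_le _ _ _).trans (max_le ?_ ?_)
    · exact (degreeOf_mul_le _ _ _).trans
        (add_le_add hq ((degreeOf_SK3_le _ _).trans he))
    · exact (degreeOf_mul_le _ _ _).trans (add_le_add hr he)
  refine ⟨?_, ?_, ?_⟩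
  · refine (degreeOf_sub_le _ _ _).trans (max_le ?_ ?_)
    · have := hsum 0 d (H.θx + H.r * H.μ)
        (fun i => ((mem_Wsp_iff.mp (w.1 i).2).1))
        (fun i => deg_gP_0 H (Nat.lt_succ_iff.mp i.isLt))
      omega
    · have := hQR 0 H.ν Ex (H.degreeOf_Q_le_xk 0 (by decide))
        (H.degreeOf_R_le_xk 0 (by decide)) hY.1
      omega
  · refine (degreeOf_sub_le _ _ _).trans (max_le ?_ ?_)
    · have := hsum 1 h (H.θy + H.r * H.ξ)
        (fun i => ((mem_Wsp_iff.mp (w.1 i).2).2.1))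
        (fun i => deg_gP_1 H (Nat.lt_succ_iff.mp i.isLt))
      omega
    · have := hQR 1 H.η Ey H.degreeOf_Q_le_y H.degreeOf_R_le_y hY.2.1
      omega
  · refine (degreeOf_sub_le _ _ _).trans (max_le ?_ ?_)
    · have := hsum 2 0 (H.θk + H.r * H.μ)
        (fun i => ((mem_Wsp_iff.mp (w.1 i).2).2.2))
        (fun i => deg_gP_2 H (Nat.lt_succ_iff.mp i.isLt))
      omega
    · have := hQR 2 H.ν Ek (H.degreeOf_Q_le_xk 2 (by decide))
        (H.degreeOf_R_le_xk 2 (by decide)) hY.2.2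
      omega

end Helpers

open HyperData in
/-- Order–degree–height surface for hypergeometric creative telescoping
(non-rational case), linear-algebra core: if `(r,d,h)` satisfies the stated
inequality (and the auxiliary nonnegativity conditions), then there are
`c_0, …, c_r ∈ C[x,y]` with `deg_x c_i ≤ d`, `deg_y c_i ≤ h` and `Y ∈ C[x,y,k]`
with the indicated degree bounds, not all zero, solving
`Σ_i c_i α^i S_x^i(p) Π_m P_{i,m} = Q·S_k(Y) − R·Y`. -/
theorem telescoper_order_degree_height_surface_nonrational
    (C : Type*) [Field C] [CharZero C] (H : HyperData C) (d h : ℕ)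
    (h1 : (0 : ℤ) ≤ (d : ℤ) + H.θx + H.r * H.μ - H.ν)
    (h2 : (0 : ℤ) ≤ (h : ℤ) + H.θy + H.r * H.ξ - H.η)
    (h3 : (0 : ℤ) ≤ (H.θk : ℤ) + H.r * H.μ - H.ν)
    (hineq :
      ((H.r : ℤ) + 1) * ((d : ℤ) + 1) * ((h : ℤ) + 1)
        - ((d : ℤ) + 1 + H.θx + H.r * H.μ) * ((H.θk : ℤ) + H.r * H.μ + 1) * H.η
        - ((d : ℤ) + 2 + H.θx + H.θk + 2 * H.r * H.μ - H.ν)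
            * ((h : ℤ) + 1 + H.θy + H.r * H.ξ - H.η) * H.ν > 0) :
    ∃ (c : ℕ → P3 C) (Y : P3 C),
      (∀ i ≤ H.r, degreeOf 2 (c i) = 0 ∧ degreeOf 0 (c i) ≤ d ∧ degreeOf 1 (c i) ≤ h) ∧
      (degreeOf 0 Y : ℤ) ≤ (d : ℤ) + H.θx + H.r * H.μ - H.ν ∧
      (degreeOf 1 Y : ℤ) ≤ (h : ℤ) + H.θy + H.r * H.ξ - H.η ∧
      (degreeOf 2 Y : ℤ) ≤ (H.θk : ℤ) + H.r * H.μ - H.ν ∧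
      ¬ ((∀ i ≤ H.r, c i = 0) ∧ Y = 0) ∧
      H.P c = H.Q * SK3 C Y - H.R * Y := by
  classical
  -- basic inequalities from the integer hypotheses
  have hν1 : H.ν ≤ d + H.θx + H.r * H.μ := by
    have : (H.ν : ℤ) ≤ (d : ℤ) + H.θx + H.r * H.μ := by linarith
    exact_mod_cast this
  have hν2 : H.η ≤ h + H.θy + H.r * H.ξ := by
    have : (H.η : ℤ) ≤ (h : ℤ) + H.θy + H.r * H.ξ := by linarith
    exact_mod_cast this
  have hν3 : H.ν ≤ H.θk + H.r * H.μ := by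
    have : (H.ν : ℤ) ≤ (H.θk : ℤ) + H.r * H.μ := by linarith
    exact_mod_cast this
  set Ex := d + H.θx + H.r * H.μ - H.ν with hExdef
  set Ey := h + H.θy + H.r * H.ξ - H.η with hEydef
  set Ek := H.θk + H.r * H.μ - H.ν with hEkdef
  have hEx : Ex + H.ν = d + H.θx + H.r * H.μ := by omega
  have hEy : Ey + H.η = h + H.θy + H.r * H.ξ := by omega
  have hEk : Ek + H.ν = H.θk + H.r * H.μ := by omega
  -- the restricted linear map
  let V := Wsp C (d + H.θx + H.r * H.μ) (h + H.θy + H.r * H.ξ) (H.θk + H.r * H.μ)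
  let φ : ((Fin (H.r + 1) → Wsp C d h 0) × Wsp C Ex Ey Ek) →ₗ[C] V :=
    (phiMap H d h Ex Ey Ek).codRestrict V (phiMap_mem H hEx hEy hEk)
  -- dimension count
  have hdom : Module.finrank C ((Fin (H.r + 1) → Wsp C d h 0) × Wsp C Ex Ey Ek)
      = (H.r + 1) * ((d + 1) * (h + 1) * (0 + 1)) + (Ex + 1) * (Ey + 1) * (Ek + 1) := by
    rw [Module.finrank_prod, Module.finrank_pi_fintype, finrank_Wsp]
    simp [finrank_Wsp, Finset.sum_const, mul_comm]
  have hcod : Module.finrank C V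
      = (d + H.θx + H.r * H.μ + 1) * (h + H.θy + H.r * H.ξ + 1) * (H.θk + H.r * H.μ + 1) :=
    finrank_Wsp _ _ _
  have hExZ : ((Ex : ℕ) : ℤ) = (d : ℤ) + H.θx + H.r * H.μ - H.ν := by
    rw [hExdef]; push_cast [Nat.cast_sub hν1]; ring
  have hEyZ : ((Ey : ℕ) : ℤ) = (h : ℤ) + H.θy + H.r * H.ξ - H.η := by
    rw [hEydef]; push_cast [Nat.cast_sub hν2]; ring
  have hEkZ : ((Ek : ℕ) : ℤ) = (H.θk : ℤ) + H.r * H.μ - H.ν := by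
    rw [hEkdef]; push_cast [Nat.cast_sub hν3]; ring
  have hlt : Module.finrank C V
      < Module.finrank C ((Fin (H.r + 1) → Wsp C d h 0) × Wsp C Ex Ey Ek) := by
    rw [hdom, hcod]
    have key : ((d : ℤ) + H.θx + H.r * H.μ + 1) * ((h : ℤ) + H.θy + H.r * H.ξ + 1)
          * ((H.θk : ℤ) + H.r * H.μ + 1)
        - ((d : ℤ) + H.θx + H.r * H.μ - H.ν + 1) * ((h : ℤ) + H.θy + H.r * H.ξ - H.η + 1)
          * ((H.θk : ℤ) + H.r * H.μ - H.ν + 1)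
        = ((d : ℤ) + 1 + H.θx + H.r * H.μ) * ((H.θk : ℤ) + H.r * H.μ + 1) * H.η
          + ((d : ℤ) + 2 + H.θx + H.θk + 2 * H.r * H.μ - H.ν)
            * ((h : ℤ) + 1 + H.θy + H.r * H.ξ - H.η) * H.ν := by ring
    zify
    rw [hExZ, hEyZ, hEkZ]
    push_cast
    linarith [hineq, key]
  -- a nonzero kernel element
  have hninj : ¬ Function.Injective φ := by
    intro hinj
    exact absurd (LinearMap.finrank_le_finrank_of_injective hinj) (by omega)
  rw [Function.not_injective_iff] at hninj
  obtain ⟨w1, w2, heq, hne⟩ := hninj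
  set w := w1 - w2 with hwdef
  have hwne : w ≠ 0 := sub_ne_zero.mpr hne
  have hw0 : phiMap H d h Ex Ey Ek w = 0 := by
    have h1' : phiMap H d h Ex Ey Ek w1 = phiMap H d h Ex Ey Ek w2 :=
      congrArg Subtype.val heq
    rw [hwdef, map_sub, h1', sub_self]
  -- extract the solution
  refine ⟨fun n => if hn : n ≤ H.r then ((w.1 ⟨n, Nat.lt_succ_of_le hn⟩ : P3 C)) else 0,
    (w.2 : P3 C), ?_, ?_, ?_, ?_, ?_, ?_⟩
  · intro i hi
    simp only [dif_pos hi]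
    have hm := mem_Wsp_iff.mp (w.1 ⟨i, Nat.lt_succ_of_le hi⟩).2
    exact ⟨Nat.le_zero.mp hm.2.2, hm.1, hm.2.1⟩
  · have := (mem_Wsp_iff.mp w.2.2).1
    rw [← hExZ]
    exact_mod_cast this
  · have := (mem_Wsp_iff.mp w.2.2).2.1
    rw [← hEyZ]
    exact_mod_cast this
  · have := (mem_Wsp_iff.mp w.2.2).2.2
    rw [← hEkZ]
    exact_mod_cast this
  · rintro ⟨hc, hY⟩
    apply hwne
    have hw1 : w.1 = 0 := by
      funext i
      have := hc i.val (Nat.lt_succ_iff.mp i.isLt)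
      simp only [dif_pos (Nat.lt_succ_iff.mp i.isLt)] at this
      simp only [Fin.eta] at this
      exact ZeroMemClass.coe_eq_zero.mp this
    have hw2 : w.2 = 0 := ZeroMemClass.coe_eq_zero.mp hY
    exact Prod.ext hw1 hw2
  · have hsum : H.P (fun n => if hn : n ≤ H.r then ((w.1 ⟨n, Nat.lt_succ_of_le hn⟩ : P3 C)) else 0)
        = ∑ i : Fin (H.r + 1), ((w.1 i : P3 C) * gP H i.val) := by
      rw [HyperData.P, Finset.sum_range]
      refine Finset.sum_congr rfl fun i _ => ?_
      simp only [dif_pos (Nat.lt_succ_iff.mp i.isLt)]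
      simp only [Fin.eta, gP]
      ring
    have := hw0
    rw [phiMap] at this
    simp only [LinearMap.coe_mk, AddHom.coe_mk] at this
    rw [hsum]
    rw [sub_eq_zero] at this
    exact this
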